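/- If K is a finitely generated max cone in ℝ≥0^n (K = span(S) for some finite set S), then the set of scaled extremals of K is a scaled basis for K, and it is the unique scaled basis: every basis of K consisting of scaled elements equals the set of scaled extremals of K. -/

import Mathlib

open scoped NNReal

/-- The max-algebraic span of `S`: all vectors `⨆_{x ∈ S} λ_x • x` where only
finitely many coefficients `λ_x` are nonzero (`MaxSpan ∅ = {0}`). -/
def MaxSpan {n : ℕ} (S : Set (Fin n → ℝ≥0)) : Set (Fin n → ℝ≥0) :=
  {u | ∃ (F : Finset (Fin n → ℝ≥0)) (lam : (Fin n → ℝ≥0) → ℝ≥0),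
    ↑F ⊆ S ∧ u = F.sup (fun x => lam x • x)}

/-- A max cone: a subset of `ℝ≥0ⁿ` closed under pointwise max `⊔` and under
multiplication by nonnegative scalars. -/
def MaxCone {n : ℕ} (K : Set (Fin n → ℝ≥0)) : Prop :=
  0 ∈ K ∧ (∀ x ∈ K, ∀ y ∈ K, x ⊔ y ∈ K) ∧ (∀ (c : ℝ≥0), ∀ x ∈ K, c • x ∈ K)

/-- `u` is an extremal in `K` if `u = v ⊔ w` with `v, w ∈ K` implies `u = v` or `u = w`. -/
def IsExtremal {n : ℕ} (K : Set (Fin n → ℝ≥0)) (u : Fin n → ℝ≥0) : Prop :=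
  u ∈ K ∧ ∀ v ∈ K, ∀ w ∈ K, u = v ⊔ w → u = v ∨ u = w

/-- A vector is scaled if its max norm `⨆ i, x i` equals `1`. -/
def Scaled {n : ℕ} (x : Fin n → ℝ≥0) : Prop := (⨆ i, x i) = 1

/-- The support of a vector. -/
def supp {n : ℕ} (v : Fin n → ℝ≥0) : Set (Fin n) := {j | 0 < v j}

/-- For `j ∈ supp u`, `rescale u j = (1 / u j) • u`, the `j`-scaling `u(j)`. -/
noncomputable def rescale {n : ℕ} (u : Fin n → ℝ≥0) (j : Fin n) : Fin n → ℝ≥0 :=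
  (u j)⁻¹ • u

/-- `T(j) = {u(j) : u ∈ T, j ∈ supp u}`. -/
noncomputable def setScale {n : ℕ} (T : Set (Fin n → ℝ≥0)) (j : Fin n) :
    Set (Fin n → ℝ≥0) :=
  {y | ∃ u ∈ T, j ∈ supp u ∧ y = rescale u j}

/-- `u` is minimal in `T` if `v ∈ T` and `v ≤ u` imply `v = u`. -/
def MinimalIn {n : ℕ} (T : Set (Fin n → ℝ≥0)) (u : Fin n → ℝ≥0) : Prop :=
  u ∈ T ∧ ∀ v ∈ T, v ≤ u → v = u

/-- A set is totally dependent if each of its elements is a max combination of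
the remaining ones. -/
def TotallyDependent {n : ℕ} (S : Set (Fin n → ℝ≥0)) : Prop :=
  ∀ x ∈ S, x ∈ MaxSpan (S \ {x})

/-- A set is independent if none of its elements is a max combination of
the remaining ones. -/
def IndependentSet {n : ℕ} (S : Set (Fin n → ℝ≥0)) : Prop :=
  ∀ x ∈ S, x ∉ MaxSpan (S \ {x})

/-- A basis for `K` is an independent set of generators for `K`. -/
def IsBasis {n : ℕ} (S K : Set (Fin n → ℝ≥0)) : Prop :=
  IndependentSet S ∧ MaxSpan S = K



section Aux
set_option synthInstance.maxHeartbeats 1000000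
set_option maxHeartbeats 1000000
variable {n : ℕ}

private lemma smul_sup' (c : ℝ≥0) (a b : Fin n → ℝ≥0) : c • (a ⊔ b) = c • a ⊔ c • b := by
  funext j
  simp only [Pi.smul_apply, Pi.sup_apply, smul_eq_mul]
  rcases le_total (a j) (b j) with h | h
  · rw [max_eq_right h, max_eq_right (mul_le_mul_right h c)]
  · rw [max_eq_left h, max_eq_left (mul_le_mul_right h c)]

private lemma sup_smul'' (a b : ℝ≥0) (x : Fin n → ℝ≥0) : (a ⊔ b) • x = a • x ⊔ b • x := by
  funext j
  simp only [Pi.smul_apply, Pi.sup_apply, smul_eq_mul]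
  rcases le_total a b with h | h
  · rw [max_eq_right h, max_eq_right (mul_le_mul_left h _)]
  · rw [max_eq_left h, max_eq_left (mul_le_mul_left h _)]

private lemma smul_finsetSup (c : ℝ≥0) (F : Finset (Fin n → ℝ≥0)) (f : (Fin n → ℝ≥0) → (Fin n → ℝ≥0)) :
    c • F.sup f = F.sup (fun x => c • f x) := by
  induction F using Finset.cons_induction with
  | empty => simp only [Finset.sup_empty]; funext j; simp
  | cons a F ha ih => rw [Finset.sup_cons, Finset.sup_cons, smul_sup', ih]

private lemma finsetSup_mem {K : Set (Fin n → ℝ≥0)} (hK : MaxCone K)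
    (F : Finset (Fin n → ℝ≥0)) (f : (Fin n → ℝ≥0) → (Fin n → ℝ≥0))
    (hf : ∀ x ∈ F, f x ∈ K) : F.sup f ∈ K := by
  induction F using Finset.cons_induction with
  | empty =>
    have : (⊥ : Fin n → ℝ≥0) = 0 := by funext j; simp
    simpa [this] using hK.1
  | cons a F ha ih =>
    rw [Finset.sup_cons]
    exact hK.2.1 _ (hf a (Finset.mem_cons_self a F)) _
      (ih fun x hx => hf x (Finset.mem_cons_of_mem hx))

private lemma subset_maxSpan (S : Set (Fin n → ℝ≥0)) : S ⊆ MaxSpan S := by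
  intro x hx
  exact ⟨{x}, fun _ => 1, by simpa, by simp⟩

private lemma zero_mem_maxSpan (S : Set (Fin n → ℝ≥0)) : (0 : Fin n → ℝ≥0) ∈ MaxSpan S := by
  refine ⟨∅, fun _ => 0, by simp, ?_⟩
  rw [Finset.sup_empty]; funext j; simp

private lemma maxSpan_subset {K : Set (Fin n → ℝ≥0)} (hK : MaxCone K)
    {S : Set (Fin n → ℝ≥0)} (hS : S ⊆ K) : MaxSpan S ⊆ K := by
  rintro u ⟨F, lam, hF, rfl⟩
  exact finsetSup_mem hK F _ (fun x hx => hK.2.2 _ x (hS (hF hx)))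

private lemma maxSpan_mono {S T : Set (Fin n → ℝ≥0)} (h : S ⊆ T) : MaxSpan S ⊆ MaxSpan T := by
  rintro u ⟨F, lam, hF, rfl⟩
  exact ⟨F, lam, hF.trans h, rfl⟩

private lemma sup_congr_zero {F G : Finset (Fin n → ℝ≥0)} (lam : (Fin n → ℝ≥0) → ℝ≥0)
    (hFG : F ⊆ G) (h : ∀ x ∈ G, x ∉ F → lam x = 0) :
    G.sup (fun x => lam x • x) = F.sup (fun x => lam x • x) := by
  apply le_antisymm
  · apply Finset.sup_le; intro x hx
    by_cases hxF : x ∈ F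
    · exact Finset.le_sup (f := fun x => lam x • x) hxF
    · have : lam x • x = 0 := by rw [h x hx hxF, zero_smul]
      rw [this]; exact fun j => zero_le
  · exact Finset.sup_mono hFG

/-- Normalized membership: coefficients vanish outside `F`. -/
private lemma mem_maxSpan_norm {S : Set (Fin n → ℝ≥0)} {u : Fin n → ℝ≥0}
    (hu : u ∈ MaxSpan S) :
    ∃ (F : Finset (Fin n → ℝ≥0)) (lam : (Fin n → ℝ≥0) → ℝ≥0),
      ↑F ⊆ S ∧ (∀ x, x ∉ F → lam x = 0) ∧ u = F.sup (fun x => lam x • x) := by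
  classical
  obtain ⟨F, lam, hF, rfl⟩ := hu
  refine ⟨F, fun x => if x ∈ F then lam x else 0, hF, fun x hx => by simp [hx], ?_⟩
  exact (Finset.sup_congr rfl (fun x hx => by simp [hx])).symm

private lemma maxCone_maxSpan (S : Set (Fin n → ℝ≥0)) : MaxCone (MaxSpan S) := by
  classical
  refine ⟨zero_mem_maxSpan S, ?_, ?_⟩
  · intro x hx y hy
    obtain ⟨F, lam, hF, hlam, rfl⟩ := mem_maxSpan_norm hx
    obtain ⟨G, mu, hG, hmu, rfl⟩ := mem_maxSpan_norm hy
    refine ⟨F ∪ G, fun z => lam z ⊔ mu z, by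
      rw [Finset.coe_union]; exact Set.union_subset hF hG, ?_⟩
    have h1 : (F ∪ G).sup (fun z => (lam z ⊔ mu z) • z)
        = (F ∪ G).sup (fun z => lam z • z) ⊔ (F ∪ G).sup (fun z => mu z • z) := by
      rw [← Finset.sup_sup]
      exact Finset.sup_congr rfl (fun z _ => sup_smul'' _ _ _)
    rw [h1, sup_congr_zero lam Finset.subset_union_left
        (fun z _ hz => hlam z hz),
      sup_congr_zero mu Finset.subset_union_right (fun z _ hz => hmu z hz)]
  · rintro c x ⟨F, lam, hF, rfl⟩
    refine ⟨F, fun z => c * lam z, hF, ?_⟩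
    rw [smul_finsetSup]
    exact Finset.sup_congr rfl (fun z _ => (smul_smul c (lam z) z))

private lemma maxSpan_span_subset {S T : Set (Fin n → ℝ≥0)} (h : S ⊆ MaxSpan T) :
    MaxSpan S ⊆ MaxSpan T :=
  maxSpan_subset (maxCone_maxSpan T) h

private lemma maxSpan_diff_eq {S : Set (Fin n → ℝ≥0)} {x : Fin n → ℝ≥0}
    (hx : x ∈ MaxSpan (S \ {x})) : MaxSpan (S \ {x}) = MaxSpan S := by
  apply le_antisymm (maxSpan_mono Set.diff_subset)
  apply maxSpan_span_subset
  intro y hy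
  by_cases hyx : y = x
  · exact hyx ▸ hx
  · exact subset_maxSpan _ ⟨hy, hyx⟩

private lemma extremal_of_finsetSup {K : Set (Fin n → ℝ≥0)} (hK : MaxCone K)
    {u : Fin n → ℝ≥0} (hu : IsExtremal K u) (hu0 : u ≠ 0)
    {F : Finset (Fin n → ℝ≥0)} {f : (Fin n → ℝ≥0) → (Fin n → ℝ≥0)}
    (hf : ∀ x ∈ F, f x ∈ K) (h : u = F.sup f) :
    ∃ x ∈ F, u = f x := by
  induction F using Finset.cons_induction with
  | empty =>
    exfalso; apply hu0
    rw [h, Finset.sup_empty]; funext j; simp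
  | cons a F ha ih =>
    rw [Finset.sup_cons] at h
    rcases hu.2 (f a) (hf a (Finset.mem_cons_self a F)) (F.sup f)
        (finsetSup_mem hK F f (fun x hx => hf x (Finset.mem_cons_of_mem hx))) h with h1 | h2
    · exact ⟨a, Finset.mem_cons_self a F, h1⟩
    · obtain ⟨x, hx, hex⟩ := ih (fun x hx => hf x (Finset.mem_cons_of_mem hx)) h2
      exact ⟨x, Finset.mem_cons_of_mem hx, hex⟩

private lemma scaled_ne_zero {x : Fin n → ℝ≥0} (hx : Scaled x) : x ≠ 0 := by
  intro h
  rw [Scaled, h] at hx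
  rcases isEmpty_or_nonempty (Fin n) with h0 | h0
  · rw [ciSup_of_empty] at hx
    simp at hx
  · simp only [Pi.zero_apply, ciSup_const] at hx
    exact one_ne_zero hx.symm

private lemma iSup_smul_apply (c : ℝ≥0) (x : Fin n → ℝ≥0) :
    (⨆ i, (c • x) i) = c * ⨆ i, x i := by
  simp only [Pi.smul_apply, smul_eq_mul]
  exact (NNReal.mul_iSup x c).symm

private lemma scaled_smul_scaled {x y : Fin n → ℝ≥0} (hx : Scaled x) (hy : Scaled y)
    {c : ℝ≥0} (h : x = c • y) : x = y := by
  have h1 : (1 : ℝ≥0) = c := by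
    rw [← hx, h, iSup_smul_apply, hy, mul_one]
  rw [h, ← h1, one_smul]

private lemma extremal_smul {K : Set (Fin n → ℝ≥0)} (hK : MaxCone K)
    {u : Fin n → ℝ≥0} (hu : IsExtremal K u) {c : ℝ≥0} (hc : c ≠ 0) :
    IsExtremal K (c • u) := by
  refine ⟨hK.2.2 c u hu.1, ?_⟩
  intro v hv w hw h
  have hu' : u = c⁻¹ • v ⊔ c⁻¹ • w := by
    rw [← smul_sup', ← h, smul_smul, inv_mul_cancel₀ hc, one_smul]
  rcases hu.2 _ (hK.2.2 c⁻¹ v hv) _ (hK.2.2 c⁻¹ w hw) hu' with h1 | h1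
  · left; rw [h1, smul_smul, mul_inv_cancel₀ hc, one_smul]
  · right; rw [h1, smul_smul, mul_inv_cancel₀ hc, one_smul]


private lemma coef_lt_one {x : Fin n → ℝ≥0} {j : Fin n} (hj : 0 < x j)
    (c : (Fin n → ℝ≥0) → ℝ≥0) (F' : Finset (Fin n → ℝ≥0)) (v' : Fin n → ℝ≥0)
    (hc : ∀ z, z ∉ F' → c z = 0) (hv' : v' = F'.sup (fun z => c z • z))
    (hvx : v' ≤ x) (hne : x ≠ v') : c x < 1 := by
  classical
  by_cases hxF : x ∈ F'
  · have hle : c x • x ≤ v' := hv' ▸ Finset.le_sup (f := fun z => c z • z) hxF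
    have h1 : c x * x j ≤ x j := le_trans (hle j) (hvx j)
    have h2 : c x ≤ 1 := (mul_le_iff_le_one_left hj).mp h1
    rcases lt_or_eq_of_le h2 with h | h
    · exact h
    · exfalso
      apply hne
      apply le_antisymm _ hvx
      calc x = c x • x := by rw [h, one_smul]
        _ ≤ v' := hle
  · rw [hc x hxF]; exact zero_lt_one

private lemma key_removal {K S : Set (Fin n → ℝ≥0)} (hK : MaxCone K) (hSK : MaxSpan S = K)
    {x : Fin n → ℝ≥0} (hx0 : x ≠ 0) (hxK : x ∈ K) (hnx : ¬ IsExtremal K x) :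
    x ∈ MaxSpan (S \ {x}) := by
  classical
  rw [IsExtremal, not_and] at hnx
  push_neg at hnx
  obtain ⟨v, hv, w, hw, hvw, hxv, hxw⟩ := hnx hxK
  rw [← hSK] at hv hw
  obtain ⟨F, lam, hF, hlam, hveq⟩ := mem_maxSpan_norm hv
  obtain ⟨G, mu, hG, hmu, hweq⟩ := mem_maxSpan_norm hw
  set nu : (Fin n → ℝ≥0) → ℝ≥0 := fun z => lam z ⊔ mu z with hnu
  have hxsup : x = (F ∪ G).sup (fun z => nu z • z) := by
    have h1 : (F ∪ G).sup (fun z => nu z • z)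
        = (F ∪ G).sup (fun z => lam z • z) ⊔ (F ∪ G).sup (fun z => mu z • z) := by
      rw [← Finset.sup_sup]
      exact Finset.sup_congr rfl (fun z _ => sup_smul'' _ _ _)
    rw [h1, sup_congr_zero lam Finset.subset_union_left (fun z _ hz => hlam z hz),
      sup_congr_zero mu Finset.subset_union_right (fun z _ hz => hmu z hz),
      ← hveq, ← hweq]
    exact hvw
  obtain ⟨j, hj⟩ : ∃ j, 0 < x j := by
    by_contra h
    push_neg at h
    exact hx0 (funext fun j => le_antisymm (h j) zero_le)
  have hvx : v ≤ x := hvw ▸ le_sup_left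
  have hwx : w ≤ x := hvw ▸ le_sup_right
  have hlamlt : lam x < 1 := coef_lt_one hj lam F v hlam hveq hvx hxv
  have hmult : mu x < 1 := coef_lt_one hj mu G w hmu hweq hwx hxw
  have hnux : nu x < 1 := max_lt hlamlt hmult
  set r : Fin n → ℝ≥0 := ((F ∪ G).erase x).sup (fun z => nu z • z) with hr
  have hrx : r ≤ x := by
    rw [hxsup]
    exact Finset.sup_mono (Finset.erase_subset _ _)
  have hle : x ≤ (nu x) • x ⊔ r := by
    conv_lhs => rw [hxsup]
    apply Finset.sup_le
    intro z hz
    by_cases hzx : z = x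
    · subst hzx; exact le_sup_left
    · exact le_trans (Finset.le_sup (f := fun z => nu z • z)
        (Finset.mem_erase.mpr ⟨hzx, hz⟩)) le_sup_right
  have hxr : x ≤ r := by
    intro j'
    by_cases hj' : 0 < x j'
    · have h2 : x j' ≤ (nu x * x j') ⊔ r j' := by
        have := hle j'
        simpa [Pi.sup_apply, Pi.smul_apply] using this
      by_contra h3
      push_neg at h3
      exact absurd h2 (not_le.mpr (max_lt (mul_lt_of_lt_one_left hj' hnux) h3))
    · push_neg at hj'
      exact le_trans (le_antisymm hj' zero_le).le zero_le
  have hxeqr : x = r := le_antisymm hxr hrx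
  refine ⟨(F ∪ G).erase x, nu, ?_, hxeqr⟩
  rw [Finset.coe_erase]
  apply Set.diff_subset_diff_left
  rw [Finset.coe_union]
  exact Set.union_subset hF hG

private lemma extract_extremal {K : Set (Fin n → ℝ≥0)} (hK : MaxCone K)
    (F : Finset (Fin n → ℝ≥0)) :
    (∀ x ∈ F, x ≠ (0 : Fin n → ℝ≥0)) → MaxSpan ↑F = K →
    ∃ G : Finset (Fin n → ℝ≥0), ↑G ⊆ (↑F : Set (Fin n → ℝ≥0)) ∧
      (∀ x ∈ G, IsExtremal K x) ∧ MaxSpan ↑G = K := by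
  classical
  induction F using Finset.strongInduction with
  | _ F ih =>
    intro h0 hFK
    by_cases hall : ∀ x ∈ F, IsExtremal K x
    · exact ⟨F, le_refl _, hall, hFK⟩
    · push_neg at hall
      obtain ⟨x, hxF, hnx⟩ := hall
      have hxK : x ∈ K := hFK ▸ subset_maxSpan _ (Finset.mem_coe.mpr hxF)
      have hmem := key_removal hK hFK (h0 x hxF) hxK hnx
      have hdiff : MaxSpan ((↑F : Set (Fin n → ℝ≥0)) \ {x}) = K :=
        (maxSpan_diff_eq hmem).trans hFK
      have hspan : MaxSpan ↑(F.erase x) = K := by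
        rw [Finset.coe_erase]; exact hdiff
      obtain ⟨G, hG1, hG2, hG3⟩ := ih (F.erase x) (Finset.erase_ssubset hxF)
        (fun y hy => h0 y (Finset.mem_of_mem_erase hy)) hspan
      refine ⟨G, hG1.trans ?_, hG2, hG3⟩
      rw [Finset.coe_erase]
      exact Set.diff_subset

end Aux

set_option synthInstance.maxHeartbeats 1000000
set_option maxHeartbeats 1000000
/-- a finitely generated max cone `K` has the set of its scaled
extremals as a basis, and this is the unique basis consisting of scaled
elements. -/
theorem stmt9 {n : ℕ} (K : Set (Fin n → ℝ≥0)) (hK : MaxCone K)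
    (hfg : ∃ S : Set (Fin n → ℝ≥0), S.Finite ∧ MaxSpan S = K) :
    IsBasis {x | IsExtremal K x ∧ Scaled x} K ∧
    ∀ B : Set (Fin n → ℝ≥0), (∀ x ∈ B, Scaled x) → IsBasis B K →
      B = {x | IsExtremal K x ∧ Scaled x} := by
  classical
  set E : Set (Fin n → ℝ≥0) := {x | IsExtremal K x ∧ Scaled x} with hE
  have hEK : E ⊆ K := fun x hx => hx.1.1
  -- Independence of E
  have hEind : IndependentSet E := by
    intro x hxE hxmem
    obtain ⟨F', lam, hF', hlam, hxeq⟩ := mem_maxSpan_norm hxmem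
    have hx0 : x ≠ 0 := scaled_ne_zero hxE.2
    obtain ⟨y, hyF, hxy⟩ := extremal_of_finsetSup hK hxE.1 hx0
      (f := fun z => lam z • z) (fun z hz => hK.2.2 _ z ((hF' hz).1.1.1)) hxeq
    have hyE : y ∈ E \ {x} := hF' hyF
    exact hyE.2 (scaled_smul_scaled hxE.2 hyE.1.2 hxy).symm
  -- Generation
  have hEgen : MaxSpan E = K := by
    apply le_antisymm (maxSpan_subset hK hEK)
    obtain ⟨S, hSfin, hSK⟩ := hfg
    set F : Finset (Fin n → ℝ≥0) := hSfin.toFinset with hF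
    set F₁ : Finset (Fin n → ℝ≥0) := F.filter (fun y => y ≠ 0) with hF₁
    have hF₁coe : (↑F₁ : Set (Fin n → ℝ≥0)) = (↑F : Set (Fin n → ℝ≥0)) \ {0} := by
      ext z
      simp [hF₁, Set.mem_diff]
    have hF₁span : MaxSpan ↑F₁ = K := by
      rw [hF₁coe, maxSpan_diff_eq (zero_mem_maxSpan _)]
      rw [hF, Set.Finite.coe_toFinset]
      exact hSK
    obtain ⟨G, hG1, hG2, hG3⟩ := extract_extremal hK F₁
      (fun x hx => (Finset.mem_filter.mp hx).2) hF₁span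
    rw [← hG3]
    apply maxSpan_span_subset
    intro g hg
    have hgne : g ≠ 0 := by
      have := hG1 hg
      rw [hF₁coe] at this
      exact this.2
    set c : ℝ≥0 := ⨆ i, g i with hc
    have hcne : c ≠ 0 := by
      intro h
      apply hgne
      funext j
      have hle : g j ≤ c := le_ciSup (Set.Finite.bddAbove (Set.finite_range g)) j
      rw [h] at hle
      exact le_antisymm hle zero_le
    have hscaled : Scaled (c⁻¹ • g) := by
      rw [Scaled, iSup_smul_apply]
      exact inv_mul_cancel₀ hcne
    have hext : IsExtremal K (c⁻¹ • g) := extremal_smul hK (hG2 g hg) (inv_ne_zero hcne)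
    have hgeq : g = c • (c⁻¹ • g) := by
      rw [smul_smul, mul_inv_cancel₀ hcne, one_smul]
    rw [hgeq]
    exact (maxCone_maxSpan E).2.2 c _ (subset_maxSpan E ⟨hext, hscaled⟩)
  refine ⟨⟨hEind, hEgen⟩, ?_⟩
  -- Uniqueness
  rintro B hBscaled ⟨hBind, hBspan⟩
  have hBK : B ⊆ K := hBspan ▸ subset_maxSpan B
  ext b
  constructor
  · intro hb
    refine ⟨?_, hBscaled b hb⟩
    by_contra hnx
    exact hBind b hb (key_removal hK hBspan (scaled_ne_zero (hBscaled b hb)) (hBK hb) hnx)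
  · intro hbE
    have hbK : b ∈ MaxSpan B := hBspan.symm ▸ hbE.1.1
    obtain ⟨F', lam, hF', hlam, hbeq⟩ := mem_maxSpan_norm hbK
    have hb0 : b ≠ 0 := scaled_ne_zero hbE.2
    obtain ⟨y, hyF, hby⟩ := extremal_of_finsetSup hK hbE.1 hb0
      (f := fun z => lam z • z) (fun z hz => hK.2.2 _ z (hBK (hF' hz))) hbeq
    have : b = y := scaled_smul_scaled hbE.2 (hBscaled y (hF' hyF)) hby
    exact this ▸ hF' hyF
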